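/- The ping-pong lemma: let a group G act on a set X, let a, b ∈ G, and let A, B ⊆ X be nonempty disjoint subsets such that a^n(B) ⊆ A for all n ≠ 0 and b^n(A) ⊆ B for all n ≠ 0. Then the subgroup ⟨a, b⟩ of G is free of rank 2, freely generated by a and b. -/
import Mathlib

open Monoid Cardinal Pointwise

/-- ping-pong lemma: if `a^n B ⊆ A` and `b^n A ⊆ B` for all `n ≠ 0`,
with `A, B` nonempty and disjoint, then `a` and `b` freely generate a free subgroup. -/
theorem stmt_16 {G X : Type*} [Group G] [MulAction G X] (a b : G)
    (A B : Set X) (hA : A.Nonempty) (hB : B.Nonempty) (hdisj : Disjoint A B)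
    (ha : ∀ n : ℤ, n ≠ 0 → ∀ x ∈ B, (a ^ n) • x ∈ A)
    (hb : ∀ n : ℤ, n ≠ 0 → ∀ x ∈ A, (b ^ n) • x ∈ B) :
    Function.Injective
      (FreeGroup.lift (fun c : Bool => if c then a else b) : FreeGroup Bool →* G) := by
  classical
  set aa : Bool → G := fun c : Bool => if c then a else b with haa
  have key : (FreeGroup.lift aa : FreeGroup Bool →* G) =
      (CoprodI.lift fun i : Bool => FreeGroup.lift fun _ : Unit => aa i).comp
        (@freeGroupEquivCoprodI Bool).toMonoidHom := by
    ext i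
    simp
  rw [key, MonoidHom.coe_comp]
  refine Function.Injective.comp ?_ (MulEquiv.injective freeGroupEquivCoprodI)
  let H : Bool → Type _ := fun _ => FreeGroup Unit
  let f : ∀ i : Bool, H i →* G := fun i => FreeGroup.lift fun _ => aa i
  let X' : Bool → Set X := fun i => if i then A else B
  apply CoprodI.lift_injective_of_ping_pong f _ X'
  · intro i; cases i <;> simpa [X'] using (by assumption : _)
  · intro i j hij
    match i, j, hij with
    | true, false, _ => simpa [X', Function.onFun] using hdisj
    | false, true, _ => simpa [X', Function.onFun] using hdisj.symm
  · intro i j hij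
    refine FreeGroup.freeGroupUnitEquivInt.forall_congr_left.mpr ?_
    intro n hne1
    have hn : n ≠ 0 := by
      rintro rfl
      apply hne1
      simp [FreeGroup.freeGroupUnitEquivInt]
    change FreeGroup.lift (fun _ => aa i) (FreeGroup.of () ^ n) • X' j ⊆ X' i
    simp only [map_zpow, FreeGroup.lift_apply_of]
    rintro x ⟨y, hy, rfl⟩
    match i, j, hij with
    | true, false, _ => exact ha n hn y hy
    | false, true, _ => exact hb n hn y hy
  · right
    refine ⟨true, ?_⟩
    rw [FreeGroup.freeGroupUnitEquivInt.cardinal_eq, Cardinal.mk_denumerable]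
    exact (Cardinal.nat_lt_aleph0 3).le
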